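/- Let X be a uniformly convex Banach space, Φ a Young function with right derivative φ, f : X → ℝ ∪ {∞} a proper convex lower semicontinuous function, x ∈ X, and λ > 0. Then the function h(y) = f(y) + (1/φ(λ))·Φ(‖x − y‖) attains a unique minimizer on X. -/

import Mathlib

open Set Filter

lemma aux_integrable {φ : ℝ → ℝ} (hm : MonotoneOn φ (Set.Ici 0)) {c d : ℝ}
    (hc : 0 ≤ c) (hcd : c ≤ d) : IntervalIntegrable φ MeasureTheory.volume c d :=
  (hm.mono (by rw [Set.uIcc_of_le hcd]; exact fun t ht => hc.trans ht.1)).intervalIntegrable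

lemma aux_diff {φ Φ : ℝ → ℝ} (hm : MonotoneOn φ (Set.Ici 0))
    (hΦ : ∀ t : ℝ, 0 ≤ t → Φ t = ∫ s in (0:ℝ)..t, φ s) {c d : ℝ}
    (hc : 0 ≤ c) (hcd : c ≤ d) : Φ d - Φ c = ∫ s in c..d, φ s := by
  rw [hΦ c hc, hΦ d (hc.trans hcd),
    ← intervalIntegral.integral_add_adjacent_intervals (aux_integrable hm le_rfl hc)
      (aux_integrable hm hc hcd)]
  ring

lemma aux_lb {φ Φ : ℝ → ℝ} (hm : MonotoneOn φ (Set.Ici 0))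
    (hΦ : ∀ t : ℝ, 0 ≤ t → Φ t = ∫ s in (0:ℝ)..t, φ s) {c d : ℝ}
    (hc : 0 ≤ c) (hcd : c ≤ d) : φ c * (d - c) ≤ Φ d - Φ c := by
  rw [aux_diff hm hΦ hc hcd]
  have h1 : (∫ _s in c..d, φ c) ≤ ∫ s in c..d, φ s := by
    apply intervalIntegral.integral_mono_on hcd intervalIntegrable_const
      (aux_integrable hm hc hcd)
    exact fun s hs => hm hc (hc.trans hs.1) hs.1
  simpa [intervalIntegral.integral_const, smul_eq_mul, mul_comm] using h1

lemma aux_ub {φ Φ : ℝ → ℝ} (hm : MonotoneOn φ (Set.Ici 0))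
    (hΦ : ∀ t : ℝ, 0 ≤ t → Φ t = ∫ s in (0:ℝ)..t, φ s) {c d : ℝ}
    (hc : 0 ≤ c) (hcd : c ≤ d) : Φ d - Φ c ≤ φ d * (d - c) := by
  rw [aux_diff hm hΦ hc hcd]
  have h1 : (∫ s in c..d, φ s) ≤ ∫ _s in c..d, φ d := by
    apply intervalIntegral.integral_mono_on hcd (aux_integrable hm hc hcd)
      intervalIntegrable_const
    exact fun s hs => hm (hc.trans hs.1) (hc.trans hcd) hs.2
  simpa [intervalIntegral.integral_const, smul_eq_mul, mul_comm] using h1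

lemma aux_Φ0 {φ Φ : ℝ → ℝ} (hΦ : ∀ t : ℝ, 0 ≤ t → Φ t = ∫ s in (0:ℝ)..t, φ s) :
    Φ 0 = 0 := by rw [hΦ 0 le_rfl, intervalIntegral.integral_same]

lemma aux_Φnn {φ Φ : ℝ → ℝ} (hm : MonotoneOn φ (Set.Ici 0)) (hφ0 : φ 0 = 0)
    (hΦ : ∀ t : ℝ, 0 ≤ t → Φ t = ∫ s in (0:ℝ)..t, φ s) {c : ℝ} (hc : 0 ≤ c) :
    0 ≤ Φ c := by
  have := aux_lb hm hΦ le_rfl hc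
  rw [hφ0, aux_Φ0 hΦ] at this
  linarith

lemma aux_φnn {φ : ℝ → ℝ} (hm : MonotoneOn φ (Set.Ici 0)) (hφ0 : φ 0 = 0)
    {c : ℝ} (hc : 0 ≤ c) : 0 ≤ φ c := hφ0 ▸ hm (le_refl (0:ℝ)) hc hc

lemma aux_mono {φ Φ : ℝ → ℝ} (hm : MonotoneOn φ (Set.Ici 0)) (hφ0 : φ 0 = 0)
    (hΦ : ∀ t : ℝ, 0 ≤ t → Φ t = ∫ s in (0:ℝ)..t, φ s) {c d : ℝ}
    (hc : 0 ≤ c) (hcd : c ≤ d) : Φ c ≤ Φ d := by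
  have h1 := aux_lb hm hΦ hc hcd
  have h2 := aux_φnn hm hφ0 hc
  nlinarith

lemma aux_lip {φ Φ : ℝ → ℝ} (hm : MonotoneOn φ (Set.Ici 0)) (hφ0 : φ 0 = 0)
    (hΦ : ∀ t : ℝ, 0 ≤ t → Φ t = ∫ s in (0:ℝ)..t, φ s) {K c d : ℝ}
    (hc : 0 ≤ c) (hd : 0 ≤ d) (hcK : c ≤ K) (hdK : d ≤ K) :
    |Φ c - Φ d| ≤ φ K * |c - d| := by
  have hK : 0 ≤ K := le_trans hc hcK
  rcases le_total c d with h | h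
  · have h1 := aux_ub hm hΦ hc h
    have h2 : φ d * (d - c) ≤ φ K * (d - c) :=
      mul_le_mul_of_nonneg_right (hm hd hK hdK) (by linarith)
    have h3 : 0 ≤ Φ d - Φ c := by
      have := aux_mono hm hφ0 hΦ hc h; linarith
    rw [abs_of_nonpos (by linarith), abs_of_nonpos (by linarith)]
    linarith
  · have h1 := aux_ub hm hΦ hd h
    have h2 : φ c * (c - d) ≤ φ K * (c - d) :=
      mul_le_mul_of_nonneg_right (hm hc hK hcK) (by linarith)
    have h3 : 0 ≤ Φ c - Φ d := by
      have := aux_mono hm hφ0 hΦ hd h; linarith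
    rw [abs_of_nonneg (by linarith), abs_of_nonneg (by linarith)]
    linarith

lemma aux_strict {φ Φ : ℝ → ℝ} (hsm : StrictMonoOn φ (Set.Ici 0)) (hφ0 : φ 0 = 0)
    (hΦ : ∀ t : ℝ, 0 ≤ t → Φ t = ∫ s in (0:ℝ)..t, φ s) {c d : ℝ}
    (hc : 0 ≤ c) (hcd : c < d) : Φ c < Φ d := by
  have hm := hsm.monotoneOn
  set m := (c + d) / 2 with hmdef
  have hm0 : (0:ℝ) < m := by simp only [hmdef]; linarith
  have h1 := aux_lb hm hΦ (le_of_lt hm0) (by simp only [hmdef]; linarith : m ≤ d)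
  have h2 := aux_mono hm hφ0 hΦ hc (by simp only [hmdef]; linarith : c ≤ m)
  have h3 : 0 < φ m := by
    have := hsm (le_refl (0:ℝ)) (le_of_lt hm0) hm0
    rwa [hφ0] at this
  have h4 : 0 < φ m * (d - m) := by
    apply mul_pos h3; simp only [hmdef]; linarith
  linarith

lemma aux_midstrict {φ Φ : ℝ → ℝ} (hsm : StrictMonoOn φ (Set.Ici 0)) (hφ0 : φ 0 = 0)
    (hΦ : ∀ t : ℝ, 0 ≤ t → Φ t = ∫ s in (0:ℝ)..t, φ s) {a b : ℝ}
    (ha : 0 ≤ a) (hab : a < b) : Φ ((a + b) / 2) < (Φ a + Φ b) / 2 := by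
  have hm := hsm.monotoneOn
  set m := (a + b) / 2 with hmdef
  set m' := (m + b) / 2 with hm'def
  have hm0 : (0:ℝ) ≤ m := by simp only [hmdef]; linarith
  have hm'0 : (0:ℝ) ≤ m' := by simp only [hm'def, hmdef]; linarith
  have h1 : Φ m - Φ a ≤ φ m * (m - a) := aux_ub hm hΦ ha (by simp only [hmdef]; linarith)
  have h2 : φ m * (m' - m) ≤ Φ m' - Φ m := aux_lb hm hΦ hm0 (by simp only [hm'def]; linarith)
  have h3 : φ m' * (b - m') ≤ Φ b - Φ m' := aux_lb hm hΦ hm'0 (by simp only [hm'def]; linarith)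
  have h4 : φ m < φ m' := hsm hm0 hm'0 (by simp only [hm'def, hmdef]; linarith)
  have h5 : m - a = (b - a) / 2 := by simp only [hmdef]; ring
  have h6 : m' - m = (b - a) / 4 := by simp only [hm'def, hmdef]; ring
  have h7 : b - m' = (b - a) / 4 := by simp only [hm'def, hmdef]; ring
  rw [h5] at h1
  rw [h6] at h2
  rw [h7] at h3
  have hD : (0:ℝ) < (b - a) / 4 := by linarith
  have h8 : φ m * ((b - a)/4) < φ m' * ((b - a)/4) := by
    exact mul_lt_mul_of_pos_right h4 hD
  have h9 : φ m * ((b - a)/2) = φ m * ((b - a)/4) + φ m * ((b - a)/4) := by ring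
  linarith

lemma aux_mid' {φ Φ : ℝ → ℝ} (hsm : StrictMonoOn φ (Set.Ici 0)) (hφ0 : φ 0 = 0)
    (hΦ : ∀ t : ℝ, 0 ≤ t → Φ t = ∫ s in (0:ℝ)..t, φ s) {a b : ℝ}
    (ha : 0 ≤ a) (hb : 0 ≤ b) (hab : a ≠ b) : Φ ((a + b) / 2) < (Φ a + Φ b) / 2 := by
  rcases hab.lt_or_gt with h | h
  · exact aux_midstrict hsm hφ0 hΦ ha h
  · have := aux_midstrict hsm hφ0 hΦ hb h
    rw [show (b + a) / 2 = (a + b)/2 by ring] at this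
    linarith

lemma aux_minorant {X : Type*} [NormedAddCommGroup X] [NormedSpace ℝ X]
    (f : X → EReal) (hfbot : ∀ x, f x ≠ ⊥) (hfproper : ∃ x, f x ≠ ⊤)
    (hfconv : ∀ x y : X, ∀ t ∈ Set.Icc (0:ℝ) 1,
      f (t • x + (1 - t) • y) ≤ ((t : ℝ) : EReal) * f x + ((1 - t : ℝ) : EReal) * f y)
    (hflsc : LowerSemicontinuous f) :
    ∃ A B : ℝ, 0 ≤ A ∧ ∀ y : X, ((B - A * ‖y‖ : ℝ) : EReal) ≤ f y := by
  obtain ⟨x0, hx0⟩ := hfproper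
  have hfx0 : f x0 = ((f x0).toReal : EReal) := (EReal.coe_toReal hx0 (hfbot x0)).symm
  set r0 : ℝ := (f x0).toReal with hr0
  set E : Set (X × ℝ) := {p : X × ℝ | f p.1 ≤ (p.2 : EReal)} with hE
  -- closedness
  have hclosed : IsClosed E := by
    have h1 : IsClosed {p : X × EReal | f p.1 ≤ p.2} := hflsc.isClosed_epigraph
    have h2 : E = (fun p : X × ℝ => (p.1, (p.2 : EReal))) ⁻¹' {p : X × EReal | f p.1 ≤ p.2} := rfl
    rw [h2]
    exact h1.preimage (continuous_fst.prodMk (continuous_coe_real_ereal.comp continuous_snd))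
  -- convexity
  have hconv : Convex ℝ E := by
    rintro p hp q hq s t hs ht hst
    have ht' : t = 1 - s := by linarith
    have hp' : f p.1 ≤ ((p.2 : ℝ) : EReal) := hp
    have hq' : f q.1 ≤ ((q.2 : ℝ) : EReal) := hq
    have hps : f p.1 ≠ ⊤ := fun h => by rw [h] at hp'; exact (EReal.coe_lt_top _).not_ge hp'
    have hqs : f q.1 ≠ ⊤ := fun h => by rw [h] at hq'; exact (EReal.coe_lt_top _).not_ge hq'
    have hp1 : f p.1 = ((f p.1).toReal : EReal) := (EReal.coe_toReal hps (hfbot _)).symm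
    have hq1 : f q.1 = ((f q.1).toReal : EReal) := (EReal.coe_toReal hqs (hfbot _)).symm
    have hp2 : (f p.1).toReal ≤ p.2 := by
      rw [hp1] at hp'; exact EReal.coe_le_coe_iff.1 hp'
    have hq2 : (f q.1).toReal ≤ q.2 := by
      rw [hq1] at hq'; exact EReal.coe_le_coe_iff.1 hq'
    have hc := hfconv p.1 q.1 s ⟨hs, by linarith⟩
    rw [hp1, hq1, ← ht'] at hc
    have hmul : ((s : ℝ) : EReal) * (((f p.1).toReal : ℝ) : EReal)
        + ((t : ℝ) : EReal) * (((f q.1).toReal : ℝ) : EReal)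
        = ((s * (f p.1).toReal + t * (f q.1).toReal : ℝ) : EReal) := by
      rw [← EReal.coe_mul, ← EReal.coe_mul, ← EReal.coe_add]
    rw [hmul] at hc
    show f ((s • p + t • q).1) ≤ (((s • p + t • q).2 : ℝ) : EReal)
    have hfst : (s • p + t • q).1 = s • p.1 + t • q.1 := rfl
    have hsnd : (s • p + t • q).2 = s * p.2 + t * q.2 := rfl
    rw [hfst, hsnd]
    refine le_trans hc ?_
    rw [EReal.coe_le_coe_iff]
    have := mul_le_mul_of_nonneg_left hp2 hs
    have := mul_le_mul_of_nonneg_left hq2 ht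
    linarith
  -- the point below the epigraph
  have hp0 : (x0, r0 - 1) ∉ E := by
    intro h
    have : f x0 ≤ ((r0 - 1 : ℝ) : EReal) := h
    rw [hfx0] at this
    have := EReal.coe_le_coe_iff.1 this
    linarith
  obtain ⟨L, u, hL1, hL2⟩ := geometric_hahn_banach_closed_point hconv hclosed hp0
  set ℓ : X →L[ℝ] ℝ := L.comp (ContinuousLinearMap.inl ℝ X ℝ) with hℓ
  set β : ℝ := L (0, 1) with hβ
  have hdecomp : ∀ (y : X) (t : ℝ), L (y, t) = ℓ y + t * β := by
    intro y t
    have h1 : (y, t) = (y, (0:ℝ)) + t • ((0:X), (1:ℝ)) := by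
      simp [Prod.ext_iff]
    rw [h1, map_add, map_smul]
    simp [hℓ, hβ, smul_eq_mul]
  have hmem : ∀ (y : X) (s : ℝ), f y ≤ (s : EReal) → ℓ y + s * β < u := by
    intro y s hs
    have := hL1 (y, s) hs
    rwa [hdecomp] at this
  have hLp0 : u < ℓ x0 + (r0 - 1) * β := by rw [← hdecomp]; exact hL2
  have hx0E : ℓ x0 + r0 * β < u := hmem x0 r0 (le_of_eq hfx0)
  -- β < 0
  have hβneg : β < 0 := by
    rcases lt_trichotomy β 0 with h | h | h
    · exact h
    · exfalso; rw [h] at hLp0 hx0E; simp at hLp0 hx0E; linarith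
    · exfalso
      obtain ⟨n, hn⟩ := exists_nat_gt ((u - ℓ x0 - r0 * β) / β)
      have hmemn : f x0 ≤ ((r0 + n : ℝ) : EReal) := by
        rw [hfx0]; exact EReal.coe_le_coe_iff.2 (by linarith [Nat.cast_nonneg (α := ℝ) n])
      have := hmem x0 (r0 + n) hmemn
      rw [div_lt_iff₀ h] at hn
      nlinarith
  set β' : ℝ := -β with hβ'
  have hβ'pos : 0 < β' := by simp [hβ']; linarith
  refine ⟨‖ℓ‖ / β', (-u) / β', div_nonneg (norm_nonneg _) hβ'pos.le, ?_⟩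
  intro y
  by_cases hy : f y = ⊤
  · rw [hy]; exact le_top
  · have hfy : f y = ((f y).toReal : EReal) := (EReal.coe_toReal hy (hfbot y)).symm
    set s : ℝ := (f y).toReal with hsdef
    have h1 : ℓ y + s * β < u := hmem y s (le_of_eq hfy)
    have h2 : -(‖ℓ‖ * ‖y‖) ≤ ℓ y := by
      have h := ContinuousLinearMap.le_opNorm ℓ y
      rw [Real.norm_eq_abs] at h
      linarith [neg_abs_le (ℓ y)]
    rw [hfy]
    apply EReal.coe_le_coe_iff.2
    have hβeq : β = -β' := by simp [hβ']
    rw [hβeq] at h1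
    have h3 : ℓ y - u < s * β' := by nlinarith
    have h4 : -(‖ℓ‖ * ‖y‖) - u < s * β' := by linarith
    have h5 : (-u - ‖ℓ‖ * ‖y‖) / β' ≤ s := by
      rw [div_le_iff₀ hβ'pos]; linarith
    have h6 : -u / β' - ‖ℓ‖ / β' * ‖y‖ = (-u - ‖ℓ‖ * ‖y‖) / β' := by ring
    linarith

set_option maxHeartbeats 4000000 in
/-- Existence and uniqueness of the proximal point with a Young function in a
uniformly convex Banach space. -/
theorem stmt_6 {X : Type*} [NormedAddCommGroup X] [NormedSpace ℝ X] [CompleteSpace X]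
    (δX : ℝ → ℝ)
    (hδX : ∀ ε ∈ Set.Ioc (0:ℝ) 2, 0 < δX ε ∧ ∀ u v : X, ‖u‖ ≤ 1 → ‖v‖ ≤ 1 →
      ε ≤ ‖u - v‖ → ‖(1/2 : ℝ) • (u + v)‖ ≤ 1 - δX ε)
    (φ Φ : ℝ → ℝ)
    (hφmono : StrictMonoOn φ (Set.Ici 0)) (hφ0 : φ 0 = 0)
    (hφrc : ∀ t : ℝ, 0 ≤ t → ContinuousWithinAt φ (Set.Ici t) t)
    (hφtop : Filter.Tendsto φ Filter.atTop Filter.atTop)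
    (hΦ : ∀ t : ℝ, 0 ≤ t → Φ t = ∫ s in (0:ℝ)..t, φ s)
    (f : X → EReal) (hfbot : ∀ x, f x ≠ ⊥) (hfproper : ∃ x, f x ≠ ⊤)
    (hfconv : ∀ x y : X, ∀ t ∈ Set.Icc (0:ℝ) 1,
      f (t • x + (1 - t) • y) ≤ ((t : ℝ) : EReal) * f x + ((1 - t : ℝ) : EReal) * f y)
    (hflsc : LowerSemicontinuous f)
    (x : X) (lam : ℝ) (hlam : 0 < lam) :
    ∃! m : X, ∀ y : X,
      f m + ((Φ ‖x - m‖ / φ lam : ℝ) : EReal) ≤ f y + ((Φ ‖x - y‖ / φ lam : ℝ) : EReal) := by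
  classical
  have hm : MonotoneOn φ (Set.Ici 0) := hφmono.monotoneOn
  have hφlam : 0 < φ lam := by
    have := hφmono (le_refl (0:ℝ)) hlam.le hlam
    rwa [hφ0] at this
  set G : X → EReal := fun z => f z + ((Φ ‖x - z‖ / φ lam : ℝ) : EReal) with hG
  suffices hEU : ∃! m : X, ∀ z : X, G m ≤ G z by exact hEU
  have hPnn : ∀ z : X, 0 ≤ Φ ‖x - z‖ / φ lam :=
    fun z => div_nonneg (aux_Φnn hm hφ0 hΦ (norm_nonneg _)) hφlam.le
  obtain ⟨A, B, hA, hAB⟩ := aux_minorant f hfbot hfproper hfconv hflsc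
  -- coercivity threshold
  obtain ⟨s₀, hs₀φ, hs₀1⟩ :=
    ((hφtop.eventually_ge_atTop ((A + 1) * φ lam)).and (Filter.eventually_ge_atTop 1)).exists
  -- lower bound for G
  have hlow : ∀ z : X, ((B - A * ‖x‖ - A * ‖x - z‖ + Φ ‖x - z‖ / φ lam : ℝ) : EReal) ≤ G z := by
    intro z
    have h1 : ((B - A * ‖z‖ : ℝ) : EReal) ≤ f z := hAB z
    have h2 : ‖z‖ ≤ ‖x‖ + ‖x - z‖ := by
      have h2' := norm_sub_le x (x - z)
      rwa [sub_sub_cancel] at h2'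
    have h3 : (B - A * ‖x‖ - A * ‖x - z‖ : ℝ) ≤ B - A * ‖z‖ := by nlinarith
    calc ((B - A * ‖x‖ - A * ‖x - z‖ + Φ ‖x - z‖ / φ lam : ℝ) : EReal)
        = ((B - A * ‖x‖ - A * ‖x - z‖ : ℝ) : EReal) + ((Φ ‖x - z‖ / φ lam : ℝ) : EReal) := by
          rw [← EReal.coe_add]
      _ ≤ ((B - A * ‖z‖ : ℝ) : EReal) + ((Φ ‖x - z‖ / φ lam : ℝ) : EReal) := by
          exact add_le_add_left (EReal.coe_le_coe_iff.2 h3) _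
      _ ≤ f z + ((Φ ‖x - z‖ / φ lam : ℝ) : EReal) := add_le_add_left h1 _
      _ = G z := rfl
  have hcoer : ∀ z : X, s₀ ≤ ‖x - z‖ →
      ((B - A * ‖x‖ - (A + 1) * s₀ + ‖x - z‖ : ℝ) : EReal) ≤ G z := by
    intro z hz
    refine le_trans ?_ (hlow z)
    rw [EReal.coe_le_coe_iff]
    have hs₀0 : (0:ℝ) ≤ s₀ := by linarith
    have h1 : φ s₀ * (‖x - z‖ - s₀) ≤ Φ ‖x - z‖ - Φ s₀ := aux_lb hm hΦ hs₀0 hz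
    have h2 : 0 ≤ Φ s₀ := aux_Φnn hm hφ0 hΦ hs₀0
    have h3 : (A + 1) * φ lam * (‖x - z‖ - s₀) ≤ φ s₀ * (‖x - z‖ - s₀) := by
      apply mul_le_mul_of_nonneg_right hs₀φ; linarith
    have h4 : (A + 1) * (‖x - z‖ - s₀) ≤ Φ ‖x - z‖ / φ lam := by
      rw [le_div_iff₀ hφlam]; nlinarith
    nlinarith
  set Cm : ℝ := min (B - A * ‖x‖ - A * s₀) (B - A * ‖x‖ - (A + 1) * s₀ + s₀) with hCm
  have hglob : ∀ z : X, ((Cm : ℝ) : EReal) ≤ G z := by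
    intro z
    rcases le_or_gt s₀ ‖x - z‖ with h | h
    · refine le_trans ?_ (hcoer z h)
      rw [EReal.coe_le_coe_iff, hCm]
      have := min_le_right (B - A * ‖x‖ - A * s₀) (B - A * ‖x‖ - (A + 1) * s₀ + s₀)
      linarith
    · refine le_trans ?_ (hlow z)
      rw [EReal.coe_le_coe_iff, hCm]
      have h5 := min_le_left (B - A * ‖x‖ - A * s₀) (B - A * ‖x‖ - (A + 1) * s₀ + s₀)
      have h6 := hPnn z
      have h7 : A * ‖x - z‖ ≤ A * s₀ := mul_le_mul_of_nonneg_left h.le hA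
      linarith
  set μ : EReal := ⨅ z, G z with hμdef
  have hμle : ∀ z : X, μ ≤ G z := fun z => iInf_le _ z
  have hμbot : μ ≠ ⊥ := by
    have : ((Cm : ℝ) : EReal) ≤ μ := le_iInf hglob
    intro h; rw [h] at this; exact (EReal.bot_lt_coe Cm).not_ge this
  obtain ⟨x1, hx1⟩ := hfproper
  have hμtop : μ ≠ ⊤ := by
    have h1 : μ ≤ G x1 := hμle x1
    have h2 : G x1 < ⊤ := EReal.add_lt_top hx1 (EReal.coe_ne_top _)
    exact (lt_of_le_of_lt h1 h2).ne
  set μr : ℝ := μ.toReal with hμrdef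
  have hμr : μ = ((μr : ℝ) : EReal) := (EReal.coe_toReal hμtop hμbot).symm
  -- characterization of points with finite G-value
  have hchar : ∀ z : X, ∀ r' : ℝ, G z ≤ (r' : EReal) →
      f z ≠ ⊤ ∧ (f z).toReal + Φ ‖x - z‖ / φ lam ≤ r' ∧
        μr ≤ (f z).toReal + Φ ‖x - z‖ / φ lam := by
    intro z r' hle
    have h0 : f z ≤ (r' : EReal) := by
      refine le_trans ?_ hle
      have : (0 : EReal) ≤ ((Φ ‖x - z‖ / φ lam : ℝ) : EReal) := by
        exact_mod_cast (hPnn z)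
      exact le_add_of_nonneg_right this
    have htop : f z ≠ ⊤ := fun h => by
      rw [h] at h0; exact (EReal.coe_lt_top r').not_ge h0
    have hfz : f z = (((f z).toReal : ℝ) : EReal) := (EReal.coe_toReal htop (hfbot z)).symm
    have hGz : G z = (((f z).toReal + Φ ‖x - z‖ / φ lam : ℝ) : EReal) := by
      show f z + _ = _
      rw [EReal.coe_add, ← hfz]
    refine ⟨htop, ?_, ?_⟩
    · rw [hGz] at hle; exact EReal.coe_le_coe_iff.1 hle
    · have := hμle z; rw [hμr, hGz] at this; exact EReal.coe_le_coe_iff.1 this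
  -- minimizing sequence
  have hseq : ∀ n : ℕ, ∃ z : X, G z ≤ ((μr + 1/((n:ℝ)+1) : ℝ) : EReal) := by
    intro n
    by_contra h
    push_neg at h
    have h1 : ((μr + 1/((n:ℝ)+1) : ℝ) : EReal) ≤ μ := le_iInf fun z => (h z).le
    rw [hμr, EReal.coe_le_coe_iff] at h1
    have : (0:ℝ) < 1/((n:ℝ)+1) := by positivity
    linarith
  choose y hy using hseq
  set r : ℕ → ℝ := fun n => (f (y n)).toReal with hrdef
  set a : ℕ → ℝ := fun n => ‖x - y n‖ with hadef
  have hfinN : ∀ n, f (y n) ≠ ⊤ := fun n => (hchar _ _ (hy n)).1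
  have hub : ∀ n, r n + Φ (a n) / φ lam ≤ μr + 1/((n:ℝ)+1) := fun n => (hchar _ _ (hy n)).2.1
  have hlbN : ∀ n, μr ≤ r n + Φ (a n) / φ lam := fun n => (hchar _ _ (hy n)).2.2
  -- uniform bound on the sequence
  set R : ℝ := max s₀ (μr + 1 - (B - A * ‖x‖ - (A + 1) * s₀)) with hRdef
  have hR0 : 0 < R := lt_of_lt_of_le (by linarith : (0:ℝ) < s₀) (le_max_left _ _)
  have hboundR : ∀ z : X, ∀ r' : ℝ, G z ≤ (r' : EReal) → r' ≤ μr + 1 → ‖x - z‖ ≤ R := by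
    intro z r' h1 h2
    rcases le_or_gt ‖x - z‖ s₀ with h | h
    · exact le_trans h (le_max_left _ _)
    · have h3 := hcoer z h.le
      have h4 := le_trans h3 (h1.trans (EReal.coe_le_coe_iff.2 h2))
      rw [EReal.coe_le_coe_iff] at h4
      refine le_trans ?_ (le_max_right _ _)
      linarith
  have haR : ∀ n, a n ≤ R := by
    intro n
    refine hboundR (y n) _ (hy n) ?_
    have : 1/((n:ℝ)+1) ≤ 1 := by
      rw [div_le_one (by positivity)]; simp [Nat.cast_nonneg]
    linarith
  -- midpoint inequality
  have hmid : ∀ y1 y2 : X, f y1 ≠ ⊤ → f y2 ≠ ⊤ →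
      μr ≤ ((f y1).toReal + (f y2).toReal)/2
        + Φ ‖x - ((1/2 : ℝ) • y1 + (1/2 : ℝ) • y2)‖ / φ lam := by
    intro y1 y2 h1 h2
    have hc := hfconv y1 y2 (1/2) ⟨by norm_num, by norm_num⟩
    rw [show (1 - 1/2 : ℝ) = 1/2 by norm_num] at hc
    have hf1 : f y1 = (((f y1).toReal : ℝ) : EReal) := (EReal.coe_toReal h1 (hfbot y1)).symm
    have hf2 : f y2 = (((f y2).toReal : ℝ) : EReal) := (EReal.coe_toReal h2 (hfbot y2)).symm
    rw [hf1, hf2, ← EReal.coe_mul, ← EReal.coe_mul, ← EReal.coe_add] at hc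
    set q : X := (1/2 : ℝ) • y1 + (1/2 : ℝ) • y2 with hq
    have hGq : G q ≤ ((1/2 * (f y1).toReal + 1/2 * (f y2).toReal
        + Φ ‖x - q‖ / φ lam : ℝ) : EReal) := by
      show f q + _ ≤ _
      rw [EReal.coe_add]
      exact add_le_add_left hc _
    obtain ⟨hqt, hq1, hq2⟩ := hchar q _ hGq
    linarith
  -- key midpoint estimate along the sequence
  have hkey : ∀ n₁ n₂ : ℕ,
      (Φ (a n₁) + Φ (a n₂))/2 - φ lam * (1/((n₁:ℝ)+1) + 1/((n₂:ℝ)+1))/2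
        ≤ Φ ‖x - ((1/2 : ℝ) • y n₁ + (1/2 : ℝ) • y n₂)‖ := by
    intro n₁ n₂
    have h := hmid (y n₁) (y n₂) (hfinN n₁) (hfinN n₂)
    have h1 := hub n₁
    have h2 := hub n₂
    set Q : ℝ := Φ ‖x - ((1/2 : ℝ) • y n₁ + (1/2 : ℝ) • y n₂)‖ with hQ
    have hdiv : Φ (a n₁) / φ lam + Φ (a n₂) / φ lam
        ≤ (1/((n₁:ℝ)+1) + 1/((n₂:ℝ)+1)) + 2 * (Q / φ lam) := by linarith
    have hc1 : Φ (a n₁) / φ lam * φ lam = Φ (a n₁) := div_mul_cancel₀ _ hφlam.ne'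
    have hc2 : Φ (a n₂) / φ lam * φ lam = Φ (a n₂) := div_mul_cancel₀ _ hφlam.ne'
    have hcQ : Q / φ lam * φ lam = Q := div_mul_cancel₀ _ hφlam.ne'
    nlinarith [mul_le_mul_of_nonneg_right hdiv hφlam.le]
  have hevhelp : ∀ {g : ℕ → ℝ} {l : ℝ}, Filter.Tendsto g Filter.atTop (nhds l) →
      ∀ c : ℝ, 0 < c → ∀ᶠ k : ℕ in Filter.atTop, |g k - l| < c := by
    intro g l hg c hc
    obtain ⟨K, hK⟩ := Metric.tendsto_atTop.1 hg c hc
    exact Filter.eventually_atTop.2 ⟨K, fun k hk => by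
      have := hK k hk; rwa [Real.dist_eq] at this⟩
  have hcauchy : CauchySeq y := by
    rw [Metric.cauchySeq_iff]
    by_contra hnc
    push_neg at hnc
    obtain ⟨ε, hε, hno⟩ := hnc
    choose Mf hMf Nf hNf hd using hno
    have hd' : ∀ k, ε ≤ ‖y (Mf k) - y (Nf k)‖ := by
      intro k
      have h1 := hd k
      rwa [dist_eq_norm] at h1
    obtain ⟨p, hpmem, ψ, hψ, hψt⟩ := (isCompact_Icc.prod isCompact_Icc).tendsto_subseq
      (x := fun k => (a (Mf k), a (Nf k)))
      (fun k => Set.mk_mem_prod ⟨norm_nonneg _, haR _⟩ ⟨norm_nonneg _, haR _⟩)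
    obtain ⟨α, β⟩ := p
    have hα0 : (0:ℝ) ≤ α := hpmem.1.1
    have hαR : α ≤ R := hpmem.1.2
    have hβ0 : (0:ℝ) ≤ β := hpmem.2.1
    have hβR : β ≤ R := hpmem.2.2
    set M : ℕ → ℕ := fun k => Mf (ψ k) with hMdef
    set N : ℕ → ℕ := fun k => Nf (ψ k) with hNdef
    have hA : Filter.Tendsto (fun k => a (M k)) Filter.atTop (nhds α) := by
      have h1 := (continuous_fst.tendsto ((α, β) : ℝ × ℝ)).comp hψt
      exact h1
    have hB : Filter.Tendsto (fun k => a (N k)) Filter.atTop (nhds β) := by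
      have h1 := (continuous_snd.tendsto ((α, β) : ℝ × ℝ)).comp hψt
      exact h1
    have hMk : ∀ k : ℕ, k ≤ M k := fun k => le_trans hψ.le_apply (hMf (ψ k))
    have hNk : ∀ k : ℕ, k ≤ N k := fun k => le_trans hψ.le_apply (hNf (ψ k))
    have hdist2 : ∀ k, ε ≤ ‖y (M k) - y (N k)‖ := fun k => hd' (ψ k)
    set e : ℕ → ℝ := fun k => φ lam * (1/((M k:ℝ)+1) + 1/((N k:ℝ)+1))/2 with hedef
    have he0 : ∀ k, 0 ≤ e k := by
      intro k
      have : (0:ℝ) ≤ 1/((M k:ℝ)+1) + 1/((N k:ℝ)+1) := by positivity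
      have := mul_nonneg hφlam.le this
      simp only [hedef]
      linarith
    have heb : ∀ k, e k ≤ φ lam * (1/((k:ℝ)+1)) := by
      intro k
      have hc1 : ((k:ℝ)) ≤ (M k : ℝ) := Nat.cast_le.2 (hMk k)
      have hc2 : ((k:ℝ)) ≤ (N k : ℝ) := Nat.cast_le.2 (hNk k)
      have h1 : 1/((M k:ℝ)+1) ≤ 1/((k:ℝ)+1) :=
        one_div_le_one_div_of_le (by positivity) (by linarith)
      have h2 : 1/((N k:ℝ)+1) ≤ 1/((k:ℝ)+1) :=
        one_div_le_one_div_of_le (by positivity) (by linarith)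
      have h3 := mul_le_mul_of_nonneg_left (add_le_add h1 h2) hφlam.le
      simp only [hedef]
      linarith
    have hetend : Filter.Tendsto e Filter.atTop (nhds 0) := by
      refine squeeze_zero he0 heb ?_
      have h1 := tendsto_one_div_add_atTop_nhds_zero_nat.const_mul (φ lam)
      simpa using h1
    have hqle2 : ∀ k, ‖x - ((1/2:ℝ) • y (M k) + (1/2:ℝ) • y (N k))‖
        ≤ (a (M k) + a (N k))/2 := by
      intro k
      have h1 : x - ((1/2:ℝ) • y (M k) + (1/2:ℝ) • y (N k))
          = (1/2:ℝ) • (x - y (M k)) + (1/2:ℝ) • (x - y (N k)) := by module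
      rw [h1]
      refine le_trans (norm_add_le _ _) ?_
      rw [norm_smul, norm_smul, Real.norm_eq_abs, abs_of_pos (by norm_num : (0:ℝ) < 1/2)]
      have e1 : ‖x - y (M k)‖ = a (M k) := rfl
      have e2 : ‖x - y (N k)‖ = a (N k) := rfl
      rw [e1, e2]; linarith
    have hkey2 : ∀ k, (Φ (a (M k)) + Φ (a (N k)))/2 - e k
        ≤ Φ ‖x - ((1/2:ℝ) • y (M k) + (1/2:ℝ) • y (N k))‖ := by
      intro k
      have h1 := hkey (M k) (N k)
      simp only [hedef]
      linarith
    have han : ∀ k : ℕ, (0:ℝ) ≤ a k := fun k => norm_nonneg _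
    by_cases hab : α = β
    · -- limits equal : use uniform convexity of the norm
      subst hab
      have hsum2 : ε ≤ α + α := by
        have h1 : Filter.Tendsto (fun k => a (M k) + a (N k)) Filter.atTop (nhds (α + α)) :=
          hA.add hB
        refine ge_of_tendsto h1 (Filter.Eventually.of_forall fun k => ?_)
        calc ε ≤ ‖y (M k) - y (N k)‖ := hdist2 k
          _ ≤ a (M k) + a (N k) := by
            have h2 : y (M k) - y (N k) = (x - y (N k)) - (x - y (M k)) := by abel
            rw [h2]
            refine le_trans (norm_sub_le _ _) ?_
            have e1 : ‖x - y (N k)‖ = a (N k) := rfl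
            have e2 : ‖x - y (M k)‖ = a (M k) := rfl
            rw [e1, e2]; linarith
      have hρ : 0 < α := by linarith
      set ε₀ : ℝ := min (ε/(2*R)) 2 with hε₀def
      have hε₀pos : 0 < ε₀ := lt_min (by positivity) (by norm_num)
      have hε₀2 : ε₀ ≤ 2 := min_le_right _ _
      obtain ⟨hδpos, hδprop⟩ := hδX ε₀ ⟨hε₀pos, hε₀2⟩
      have hδ1 : δX ε₀ ≤ 1 := by
        obtain ⟨k₀, hk₀⟩ := (hA.eventually (eventually_gt_nhds (by linarith : α/2 < α))).exists
        have hk₀pos : 0 < a (M k₀) := by linarith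
        obtain ⟨u₀, hu₀def⟩ : ∃ u₀ : X, u₀ = (a (M k₀))⁻¹ • (x - y (M k₀)) := ⟨_, rfl⟩
        have hu₀1 : ‖u₀‖ = 1 := by
          rw [hu₀def, norm_smul, Real.norm_eq_abs, abs_of_pos (inv_pos.2 hk₀pos)]
          exact inv_mul_cancel₀ hk₀pos.ne'
        have h2 := hδprop u₀ (-u₀) hu₀1.le (by rw [norm_neg]; exact hu₀1.le)
          (by
            have h3 : u₀ - -u₀ = (2:ℝ) • u₀ := by module
            have h4 : ‖u₀ - -u₀‖ = 2 := by
              rw [h3, norm_smul, hu₀1, Real.norm_eq_abs]; norm_num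
            rw [h4]; exact hε₀2)
        have h4 : u₀ + -u₀ = 0 := add_neg_cancel u₀
        rw [h4, smul_zero, norm_zero] at h2
        linarith
      set η : ℝ := min (α/2) (min (ε/4) (α * δX ε₀ / 4)) with hηdef
      have hηpos : 0 < η := by
        refine lt_min (by linarith) (lt_min (by linarith) ?_)
        have := mul_pos hρ hδpos
        linarith
      have hη1 : η ≤ α/2 := min_le_left _ _
      have hη2 : η ≤ ε/4 := le_trans (min_le_right _ _) (min_le_left _ _)
      have hη3 : η ≤ α * δX ε₀ / 4 := le_trans (min_le_right _ _) (min_le_right _ _)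
      set θ : ℝ := α - α * δX ε₀ / 2 with hθdef
      have hθ0 : 0 ≤ θ := by
        simp only [hθdef]
        have h1 : α * δX ε₀ ≤ α * 1 := mul_le_mul_of_nonneg_left hδ1 hρ.le
        linarith only [h1, hρ.le]
      have hθlt : θ < α - η := by
        simp only [hθdef]
        linarith only [hη3, mul_pos hρ hδpos]
      have hgap : 0 < Φ (α - η) - Φ θ := by
        have := aux_strict hφmono hφ0 hΦ hθ0 hθlt; linarith
      have evA := hevhelp hA η hηpos
      have evB := hevhelp hB η hηpos
      have evE : ∀ᶠ k : ℕ in Filter.atTop, e k < Φ (α - η) - Φ θ := by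
        have h1 := hevhelp hetend _ hgap
        refine h1.mono fun k hk => ?_
        rw [sub_zero] at hk
        exact lt_of_le_of_lt (le_abs_self _) hk
      obtain ⟨k, ⟨hkA, hkB⟩, hkE⟩ := ((evA.and evB).and evE).exists
      have hA1 : α - η < a (M k) := by have := abs_lt.1 hkA; linarith [this.1]
      have hA2 : a (M k) < α + η := by have := abs_lt.1 hkA; linarith [this.2]
      have hB1 : α - η < a (N k) := by have := abs_lt.1 hkB; linarith [this.1]
      have hB2 : a (N k) < α + η := by have := abs_lt.1 hkB; linarith [this.2]
      have hApos : 0 < a (M k) := by linarith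
      have hBpos : 0 < a (N k) := by linarith
      obtain ⟨u, hudef⟩ : ∃ u : X, u = (a (M k))⁻¹ • (x - y (M k)) := ⟨_, rfl⟩
      obtain ⟨v, hvdef⟩ : ∃ v : X, v = (a (N k))⁻¹ • (x - y (N k)) := ⟨_, rfl⟩
      have hu1 : ‖u‖ = 1 := by
        rw [hudef, norm_smul, Real.norm_eq_abs, abs_of_pos (inv_pos.2 hApos)]
        exact inv_mul_cancel₀ hApos.ne'
      have hv1 : ‖v‖ = 1 := by
        rw [hvdef, norm_smul, Real.norm_eq_abs, abs_of_pos (inv_pos.2 hBpos)]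
        exact inv_mul_cancel₀ hBpos.ne'
      have hw1 : (a (M k)) • u = x - y (M k) := by
        rw [hudef, smul_smul, mul_inv_cancel₀ hApos.ne', one_smul]
      have hw2 : (a (N k)) • v = x - y (N k) := by
        rw [hvdef, smul_smul, mul_inv_cancel₀ hBpos.ne', one_smul]
      have habd : |a (N k) - a (M k)| < 2*η := by
        have h1 := abs_lt.1 hkA
        have h2 := abs_lt.1 hkB
        exact abs_lt.2 ⟨by linarith [h1.2, h2.1], by linarith [h1.1, h2.2]⟩
      have hdiffeq : (a (M k))⁻¹ • ((x - y (M k)) - (x - y (N k)))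
          = (u - v) - ((a (M k))⁻¹ - (a (N k))⁻¹) • (x - y (N k)) := by
        rw [hudef, hvdef]; module
      have hn1 : ‖(a (M k))⁻¹ • ((x - y (M k)) - (x - y (N k)))‖
          = (a (M k))⁻¹ * ‖(x - y (M k)) - (x - y (N k))‖ := by
        rw [norm_smul, Real.norm_eq_abs, abs_of_pos (inv_pos.2 hApos)]
      have ha2 : ‖x - y (N k)‖ = a (N k) := rfl
      have hn2 : ‖((a (M k))⁻¹ - (a (N k))⁻¹) • (x - y (N k))‖
          = |(a (M k))⁻¹ - (a (N k))⁻¹| * a (N k) := by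
        rw [norm_smul, Real.norm_eq_abs, ha2]
      have hsub : (x - y (M k)) - (x - y (N k)) = y (N k) - y (M k) := by abel
      have hεle : ε ≤ ‖(x - y (M k)) - (x - y (N k))‖ := by
        rw [hsub, norm_sub_rev]; exact hdist2 k
      have hinv : (a (M k))⁻¹ - (a (N k))⁻¹
          = (a (N k) - a (M k)) * ((a (M k))⁻¹ * (a (N k))⁻¹) := by
        field_simp
      have hBB : (a (N k))⁻¹ * a (N k) = 1 := inv_mul_cancel₀ hBpos.ne'
      have habs2 : |(a (M k))⁻¹ - (a (N k))⁻¹| * a (N k) ≤ 2*η * (a (M k))⁻¹ := by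
        rw [hinv, abs_mul, abs_of_pos (mul_pos (inv_pos.2 hApos) (inv_pos.2 hBpos))]
        calc |a (N k) - a (M k)| * ((a (M k))⁻¹ * (a (N k))⁻¹) * a (N k)
            = |a (N k) - a (M k)| * (a (M k))⁻¹ * ((a (N k))⁻¹ * a (N k)) := by ring
          _ = |a (N k) - a (M k)| * (a (M k))⁻¹ := by rw [hBB, mul_one]
          _ ≤ 2*η * (a (M k))⁻¹ :=
            mul_le_mul_of_nonneg_right habd.le (inv_pos.2 hApos).le
      have htri : (a (M k))⁻¹ * ‖(x - y (M k)) - (x - y (N k))‖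
          ≤ ‖u - v‖ + |(a (M k))⁻¹ - (a (N k))⁻¹| * a (N k) := by
        rw [← hn1, ← hn2, hdiffeq]
        exact norm_sub_le _ _
      have huvlb : ε₀ ≤ ‖u - v‖ := by
        have h1 : (a (M k))⁻¹ * ε ≤ (a (M k))⁻¹ * ‖(x - y (M k)) - (x - y (N k))‖ :=
          mul_le_mul_of_nonneg_left hεle (inv_pos.2 hApos).le
        have h3 : (a (M k))⁻¹ * (ε - 2*η) ≤ ‖u - v‖ := by
          linarith only [htri, habs2, h1]
        have h4 : ε/2 ≤ ε - 2*η := by linarith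
        have h5 : (a (M k))⁻¹ * (ε/2) ≤ (a (M k))⁻¹ * (ε - 2*η) :=
          mul_le_mul_of_nonneg_left h4 (inv_pos.2 hApos).le
        have h6 : R⁻¹ ≤ (a (M k))⁻¹ := by
          rw [← one_div, ← one_div]
          exact one_div_le_one_div_of_le hApos (haR (M k))
        have h7 : R⁻¹ * (ε/2) ≤ (a (M k))⁻¹ * (ε/2) :=
          mul_le_mul_of_nonneg_right h6 (by positivity)
        have h8 : R⁻¹ * (ε/2) = ε/(2*R) := by
          rw [inv_mul_eq_div, div_div]
        have h2 : ε₀ ≤ ε/(2*R) := min_le_left _ _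
        linarith
      have hmidn := hδprop u v hu1.le hv1.le huvlb
      have hxq : x - ((1/2:ℝ) • y (M k) + (1/2:ℝ) • y (N k))
          = ((a (M k) + a (N k))/2) • ((1/2:ℝ) • (u + v))
            + ((a (M k) - a (N k))/4) • (u - v) := by
        have h1 : x - ((1/2:ℝ) • y (M k) + (1/2:ℝ) • y (N k))
            = (1/2:ℝ) • (x - y (M k)) + (1/2:ℝ) • (x - y (N k)) := by module
        rw [h1, ← hw1, ← hw2]; module
      have huv2 : ‖u - v‖ ≤ 2 := by
        calc ‖u - v‖ ≤ ‖u‖ + ‖v‖ := norm_sub_le _ _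
          _ = 2 := by rw [hu1, hv1]; norm_num
      have hxqn : ‖x - ((1/2:ℝ) • y (M k) + (1/2:ℝ) • y (N k))‖ ≤ θ := by
        rw [hxq]
        refine le_trans (norm_add_le _ _) ?_
        rw [norm_smul ((a (M k) + a (N k))/2) ((1/2:ℝ) • (u + v)),
          norm_smul ((a (M k) - a (N k))/4) (u - v),
          Real.norm_eq_abs, Real.norm_eq_abs]
        have hco1 : |(a (M k) + a (N k))/2| = (a (M k) + a (N k))/2 :=
          abs_of_pos (by linarith)
        have h9 : |a (M k) - a (N k)| ≤ 2*η := by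
          rw [abs_sub_comm]; exact habd.le
        have hco2 : |(a (M k) - a (N k))/4| ≤ (2*η)/4 := by
          calc |(a (M k) - a (N k))/4| = |a (M k) - a (N k)|/4 := by
                rw [abs_div]; norm_num
            _ ≤ (2*η)/4 := by linarith
        have hterm1 : |(a (M k) + a (N k))/2| * ‖(1/2:ℝ) • (u + v)‖
            ≤ (α + η) * (1 - δX ε₀) := by
          rw [hco1]
          exact mul_le_mul (by linarith) hmidn (norm_nonneg _) (by linarith)
        have hterm2 : |(a (M k) - a (N k))/4| * ‖u - v‖ ≤ (2*η/4) * 2 :=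
          mul_le_mul hco2 huv2 (norm_nonneg _) (by positivity)
        have hfinal : (α + η) * (1 - δX ε₀) + (2*η/4)*2 ≤ θ := by
          simp only [hθdef]
          linarith only [hη3, mul_nonneg hηpos.le hδpos.le]
        linarith only [hterm1, hterm2, hfinal, norm_add_le
          (((a (M k) + a (N k))/2) • ((1/2:ℝ) • (u + v)))
          (((a (M k) - a (N k))/4) • (u - v))]
      have hΦθ : Φ ‖x - ((1/2:ℝ) • y (M k) + (1/2:ℝ) • y (N k))‖ ≤ Φ θ :=
        aux_mono hm hφ0 hΦ (norm_nonneg _) hxqn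
      have hΦA : Φ (α - η) ≤ Φ (a (M k)) :=
        aux_mono hm hφ0 hΦ (by linarith) hA1.le
      have hΦB : Φ (α - η) ≤ Φ (a (N k)) :=
        aux_mono hm hφ0 hΦ (by linarith) hB1.le
      have hfin := hkey2 k
      linarith
    · -- limits distinct : strict convexity of Φ
      set γ : ℝ := ((Φ α + Φ β)/2 - Φ ((α+β)/2))/2 with hγdef
      have hγpos : 0 < γ := by
        have := aux_mid' hφmono hφ0 hΦ hα0 hβ0 hab
        simp only [hγdef]; linarith
      have hφR1 : 0 ≤ φ (R+1) := aux_φnn hm hφ0 (by linarith)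
      set η : ℝ := min 1 (γ/(φ (R+1)+1)) with hηdef
      have hηpos : 0 < η := lt_min one_pos (div_pos hγpos (by linarith))
      have hη1 : η ≤ 1 := min_le_left _ _
      have hη2 : η * (φ (R+1)+1) ≤ γ := by
        rw [← le_div_iff₀ (by linarith : (0:ℝ) < φ (R+1)+1)]
        exact min_le_right _ _
      have evA := hevhelp hA η hηpos
      have evB := hevhelp hB η hηpos
      have evE : ∀ᶠ k : ℕ in Filter.atTop, e k < 2*η := by
        have h1 := hevhelp hetend _ (by linarith : (0:ℝ) < 2*η)
        refine h1.mono fun k hk => ?_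
        rw [sub_zero] at hk
        exact lt_of_le_of_lt (le_abs_self _) hk
      obtain ⟨k, ⟨hkA, hkB⟩, hkE⟩ := ((evA.and evB).and evE).exists
      have hA1 : α - η < a (M k) := by have := abs_lt.1 hkA; linarith [this.1]
      have hA2 : a (M k) < α + η := by have := abs_lt.1 hkA; linarith [this.2]
      have hB1 : β - η < a (N k) := by have := abs_lt.1 hkB; linarith [this.1]
      have hB2 : a (N k) < β + η := by have := abs_lt.1 hkB; linarith [this.2]
      have hΦA : Φ α - φ (R+1) * η ≤ Φ (a (M k)) := by
        have hα'0 : (0:ℝ) ≤ max (α - η) 0 := le_max_right _ _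
        have hα'le : max (α - η) 0 ≤ a (M k) := max_le (by linarith) (han (M k))
        have h1 : Φ (max (α - η) 0) ≤ Φ (a (M k)) := aux_mono hm hφ0 hΦ hα'0 hα'le
        have h2 : Φ α - Φ (max (α - η) 0) ≤ φ α * (α - max (α - η) 0) :=
          aux_ub hm hΦ hα'0 (max_le (by linarith) hα0)
        have h3 : φ α ≤ φ (R+1) := hm hα0 (show (0:ℝ) ≤ R+1 by linarith) (by linarith)
        have h4 : α - max (α - η) 0 ≤ η := by
          have := le_max_left (α - η) 0; linarith
        have h5 : 0 ≤ α - max (α - η) 0 := by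
          have := max_le (by linarith : α - η ≤ α) hα0; linarith
        have h6 : φ α * (α - max (α - η) 0) ≤ φ (R+1) * η :=
          mul_le_mul h3 h4 h5 hφR1
        linarith
      have hΦB : Φ β - φ (R+1) * η ≤ Φ (a (N k)) := by
        have hβ'0 : (0:ℝ) ≤ max (β - η) 0 := le_max_right _ _
        have hβ'le : max (β - η) 0 ≤ a (N k) := max_le (by linarith) (han (N k))
        have h1 : Φ (max (β - η) 0) ≤ Φ (a (N k)) := aux_mono hm hφ0 hΦ hβ'0 hβ'le
        have h2 : Φ β - Φ (max (β - η) 0) ≤ φ β * (β - max (β - η) 0) :=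
          aux_ub hm hΦ hβ'0 (max_le (by linarith) hβ0)
        have h3 : φ β ≤ φ (R+1) := hm hβ0 (show (0:ℝ) ≤ R+1 by linarith) (by linarith)
        have h4 : β - max (β - η) 0 ≤ η := by
          have := le_max_left (β - η) 0; linarith
        have h5 : 0 ≤ β - max (β - η) 0 := by
          have := max_le (by linarith : β - η ≤ β) hβ0; linarith
        have h6 : φ β * (β - max (β - η) 0) ≤ φ (R+1) * η :=
          mul_le_mul h3 h4 h5 hφR1
        linarith
      have hup : Φ ((a (M k) + a (N k))/2) ≤ Φ ((α+β)/2) + φ (R+1) * η := by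
        have h1 : (a (M k) + a (N k))/2 ≤ (α+β)/2 + η := by linarith
        have h0 : (0:ℝ) ≤ (a (M k) + a (N k))/2 := by
          have := han (M k); have := han (N k); linarith
        have h2 : Φ ((a (M k) + a (N k))/2) ≤ Φ ((α+β)/2 + η) :=
          aux_mono hm hφ0 hΦ h0 h1
        have h3 : Φ ((α+β)/2 + η) - Φ ((α+β)/2)
            ≤ φ ((α+β)/2 + η) * ((α+β)/2 + η - (α+β)/2) :=
          aux_ub hm hΦ (by linarith) (by linarith)
        rw [show ((α+β)/2 + η - (α+β)/2 : ℝ) = η by ring] at h3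
        have h4 : φ ((α+β)/2 + η) ≤ φ (R+1) :=
          hm (show (0:ℝ) ≤ (α+β)/2 + η by linarith) (show (0:ℝ) ≤ R+1 by linarith)
            (by linarith)
        have h5 : φ ((α+β)/2 + η) * η ≤ φ (R+1) * η :=
          mul_le_mul_of_nonneg_right h4 hηpos.le
        linarith
      have hq2 : Φ ‖x - ((1/2:ℝ) • y (M k) + (1/2:ℝ) • y (N k))‖
          ≤ Φ ((a (M k) + a (N k))/2) :=
        aux_mono hm hφ0 hΦ (norm_nonneg _) (hqle2 k)
      have hfin := hkey2 k
      have hγeq : (Φ α + Φ β)/2 - Φ ((α+β)/2) = 2*γ := by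
        simp only [hγdef]; ring
      linarith only [hfin, hΦA, hΦB, hup, hq2, hη2, hkE, hγeq]
  obtain ⟨mx, hmx⟩ := cauchySeq_tendsto_of_complete hcauchy
  have hone : ∀ n : ℕ, 1/((n:ℝ)+1) ≤ 1 := by
    intro n
    rw [div_le_one (by positivity)]
    simp [Nat.cast_nonneg]
  have hmtop : f mx ≠ ⊤ := by
    intro htop
    have hev : ∀ᶠ z in nhds mx, ((μr + 1 : ℝ) : EReal) < f z :=
      hflsc mx _ (by show _ < f mx; rw [htop]; exact EReal.coe_lt_top _)
    obtain ⟨n, hn⟩ := (hmx.eventually hev).exists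
    have h1 : r n ≤ μr + 1 := by
      have h2 := hub n
      have h3 := hPnn (y n)
      have h4 := hone n
      have h5 : Φ (a n) / φ lam = Φ ‖x - y n‖ / φ lam := rfl
      linarith [h5 ▸ h3]
    have h2 : f (y n) = ((r n : ℝ) : EReal) := (EReal.coe_toReal (hfinN n) (hfbot _)).symm
    rw [h2, EReal.coe_lt_coe_iff] at hn
    linarith
  have hfmx : f mx = (((f mx).toReal : ℝ) : EReal) := (EReal.coe_toReal hmtop (hfbot mx)).symm
  set sm : ℝ := (f mx).toReal with hsmdef
  set T : ℝ := ‖x - mx‖ with hTdef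
  have htt : Filter.Tendsto (fun n => a n) Filter.atTop (nhds T) := by
    have h1 : Filter.Tendsto (fun n => x - y n) Filter.atTop (nhds (x - mx)) :=
      Filter.Tendsto.const_sub x hmx
    exact h1.norm
  have hTR : T ≤ R := le_of_tendsto htt (Filter.Eventually.of_forall haR)
  have hT0 : 0 ≤ T := norm_nonneg _
  have hsmall : sm + Φ T / φ lam ≤ μr := by
    by_contra hlt
    push_neg at hlt
    set ε' : ℝ := (sm + Φ T / φ lam - μr)/3 with hε'def
    have hε'pos : 0 < ε' := by simp only [hε'def]; linarith
    have ev1 : ∀ᶠ n in Filter.atTop, ((sm - ε' : ℝ) : EReal) < f (y n) :=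
      hmx.eventually (hflsc mx _ (by show _ < f mx; rw [hfmx]; exact EReal.coe_lt_coe_iff.2 (by linarith)))
    have hφR1 : 0 ≤ φ (R + 1) := aux_φnn hm hφ0 (by linarith)
    set κ : ℝ := ε' * φ lam / (φ (R+1) + 1) with hκdef
    have hκpos : 0 < κ := by
      apply div_pos (mul_pos hε'pos hφlam); linarith
    have ev2 : ∀ᶠ n in Filter.atTop, |a n - T| < κ := by
      have h := Metric.tendsto_atTop.1 htt κ hκpos
      obtain ⟨N, hN⟩ := h
      refine Filter.eventually_atTop.2 ⟨N, fun n hn => ?_⟩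
      have := hN n hn
      rwa [Real.dist_eq] at this
    have ev3 : ∀ᶠ n : ℕ in Filter.atTop, 1/((n:ℝ)+1) < ε' := by
      have h := Metric.tendsto_atTop.1 (tendsto_one_div_add_atTop_nhds_zero_nat (𝕜 := ℝ)) ε' hε'pos
      obtain ⟨N, hN⟩ := h
      refine Filter.eventually_atTop.2 ⟨N, fun n hn => ?_⟩
      have := hN n hn
      rw [Real.dist_eq, sub_zero] at this
      exact lt_of_le_of_lt (le_abs_self _) this
    obtain ⟨n, ⟨hn1, hn2⟩, hn3⟩ := ((ev1.and ev2).and ev3).exists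
    have h2 : f (y n) = ((r n : ℝ) : EReal) := (EReal.coe_toReal (hfinN n) (hfbot _)).symm
    rw [h2, EReal.coe_lt_coe_iff] at hn1
    have h3 : |Φ (a n) - Φ T| ≤ φ (R+1) * |a n - T| :=
      aux_lip hm hφ0 hΦ (norm_nonneg _) hT0 (by linarith [haR n]) (by linarith)
    have h4 : |Φ (a n) - Φ T| < ε' * φ lam := by
      have h5 : φ (R+1) * |a n - T| ≤ φ (R+1) * κ :=
        mul_le_mul_of_nonneg_left hn2.le hφR1
      have h6 : φ (R+1) * κ < ε' * φ lam := by
        rw [hκdef, mul_div_assoc']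
        rw [div_lt_iff₀ (by linarith : (0:ℝ) < φ (R+1) + 1)]
        nlinarith [mul_pos hε'pos hφlam]
      linarith
    have h7 : Φ T - ε' * φ lam < Φ (a n) := by
      have := abs_lt.1 h4
      linarith [this.1]
    have h8 : Φ T / φ lam - ε' < Φ (a n) / φ lam := by
      have e1 : Φ T / φ lam - ε' = (Φ T - ε' * φ lam) / φ lam := by
        rw [sub_div, mul_div_cancel_right₀ _ hφlam.ne']
      rw [e1]
      exact div_lt_div_of_pos_right h7 hφlam
    have h9 := hub n
    linarith
  have hmin : ∀ z : X, G mx ≤ G z := by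
    intro z
    have h1 : G mx ≤ ((μr : ℝ) : EReal) := by
      show f mx + _ ≤ _
      rw [hfmx, ← EReal.coe_add]
      exact EReal.coe_le_coe_iff.2 hsmall
    exact le_trans h1 (hμr ▸ hμle z)
  refine ⟨mx, hmin, ?_⟩
  intro m' hmin'
  by_contra hne
  -- both are minimizers with value μr
  have hval : ∀ w : X, (∀ z : X, G w ≤ G z) →
      f w ≠ ⊤ ∧ (f w).toReal + Φ ‖x - w‖ / φ lam = μr := by
    intro w hw
    have h1 : G w ≤ ((μr : ℝ) : EReal) := by
      rw [← hμr, hμdef]; exact le_iInf hw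
    obtain ⟨ht, h2, h3⟩ := hchar w μr h1
    exact ⟨ht, le_antisymm h2 h3⟩
  obtain ⟨ht1, hv1⟩ := hval m' hmin'
  obtain ⟨ht2, hv2⟩ := hval mx hmin
  set s1 : ℝ := (f m').toReal with hs1def
  set s2 : ℝ := (f mx).toReal with hs2def
  set aa : ℝ := ‖x - m'‖ with haadef
  set bb : ℝ := ‖x - mx‖ with hbbdef
  have hmd := hmid m' mx ht1 ht2
  set q : X := (1/2 : ℝ) • m' + (1/2 : ℝ) • mx with hqdef
  -- Φ aa + Φ bb ≤ 2 Φ ‖x - q‖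
  have hΦq : Φ aa + Φ bb ≤ 2 * Φ ‖x - q‖ := by
    have hdiv : Φ aa / φ lam + Φ bb / φ lam ≤ 2 * (Φ ‖x - q‖ / φ lam) := by linarith
    have hc1 : Φ aa / φ lam * φ lam = Φ aa := div_mul_cancel₀ _ hφlam.ne'
    have hc2 : Φ bb / φ lam * φ lam = Φ bb := div_mul_cancel₀ _ hφlam.ne'
    have hcQ : Φ ‖x - q‖ / φ lam * φ lam = Φ ‖x - q‖ := div_mul_cancel₀ _ hφlam.ne'
    nlinarith [mul_le_mul_of_nonneg_right hdiv hφlam.le]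
  have hqab : ‖x - q‖ ≤ (aa + bb)/2 := by
    have h1 : x - q = (1/2 : ℝ) • (x - m') + (1/2 : ℝ) • (x - mx) := by
      rw [hqdef]; module
    rw [h1]
    refine le_trans (norm_add_le _ _) ?_
    rw [norm_smul, norm_smul, Real.norm_eq_abs, abs_of_pos (by norm_num : (0:ℝ) < 1/2)]
    rw [← haadef, ← hbbdef]; linarith
  by_cases hab : aa = bb
  · -- equal distances: use uniform convexity
    have hρ0 : 0 < aa := by
      rcases lt_or_eq_of_le (norm_nonneg (x - m')) with h | h
      · rw [haadef]; exact h
      · exfalso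
        apply hne
        have haa0 : aa = 0 := by rw [haadef, ← h]
        have hbb0 : bb = 0 := by rw [← hab]; exact haa0
        have h1 : x - m' = 0 := norm_eq_zero.1 (by rw [← haadef]; exact haa0)
        have h2 : x - mx = 0 := norm_eq_zero.1 (by rw [← hbbdef]; exact hbb0)
        have h3 : x = m' := by
          have := sub_eq_zero.1 h1; exact this
        have h4 : x = mx := by
          have := sub_eq_zero.1 h2; exact this
        rw [← h3, ← h4]
    set u : X := aa⁻¹ • (x - m') with hudef
    set v : X := aa⁻¹ • (x - mx) with hvdef
    have hu1 : ‖u‖ = 1 := by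
      rw [hudef, norm_smul, Real.norm_eq_abs, abs_of_pos (inv_pos.2 hρ0), ← haadef,
        inv_mul_cancel₀ hρ0.ne']
    have hv1 : ‖v‖ = 1 := by
      rw [hvdef, norm_smul, Real.norm_eq_abs, abs_of_pos (inv_pos.2 hρ0), ← hbbdef, ← hab,
        inv_mul_cancel₀ hρ0.ne']
    have huv : u ≠ v := by
      intro h
      apply hne
      have h1 : (x - m') = (x - mx) := by
        have := congrArg (fun w : X => aa • w) h
        simpa [hudef, hvdef, smul_smul, mul_inv_cancel₀ hρ0.ne'] using this
      have h2 : m' - mx = 0 := by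
        have : (x - mx) - (x - m') = m' - mx := by abel
        rw [← this, h1, sub_self]
      have := sub_eq_zero.1 h2
      exact this
    set ε₀ : ℝ := ‖u - v‖ with hε₀def
    have hε₀pos : 0 < ε₀ := by
      rw [hε₀def, norm_pos_iff]
      exact sub_ne_zero.2 huv
    have hε₀2 : ε₀ ≤ 2 := by
      rw [hε₀def]
      calc ‖u - v‖ ≤ ‖u‖ + ‖v‖ := norm_sub_le _ _
        _ = 2 := by rw [hu1, hv1]; norm_num
    obtain ⟨hδpos, hδprop⟩ := hδX ε₀ ⟨hε₀pos, hε₀2⟩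
    have hmidn : ‖(1/2 : ℝ) • (u + v)‖ ≤ 1 - δX ε₀ := hδprop u v hu1.le hv1.le le_rfl
    have hw1 : aa • u = x - m' := by
      rw [hudef, smul_smul, mul_inv_cancel₀ hρ0.ne', one_smul]
    have hw2 : aa • v = x - mx := by
      rw [hvdef, smul_smul, mul_inv_cancel₀ hρ0.ne', one_smul]
    have hsplit : x - q = (1/2 : ℝ) • (x - m') + (1/2 : ℝ) • (x - mx) := by
      rw [hqdef]; module
    have hxq : x - q = aa • ((1/2 : ℝ) • (u + v)) := by
      rw [hsplit, ← hw1, ← hw2]; module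
    have hxqn : ‖x - q‖ ≤ aa * (1 - δX ε₀) := by
      rw [hxq, norm_smul, Real.norm_eq_abs, abs_of_pos hρ0]
      exact mul_le_mul_of_nonneg_left hmidn hρ0.le
    have hxqlt : ‖x - q‖ < aa := by
      have : aa * (1 - δX ε₀) < aa := by nlinarith
      linarith
    have hΦlt : Φ ‖x - q‖ < Φ aa := aux_strict hφmono hφ0 hΦ (norm_nonneg _) hxqlt
    rw [← hab] at hΦq
    linarith
  · -- distinct distances: strict convexity of Φ
    have h1 : Φ ‖x - q‖ ≤ Φ ((aa + bb)/2) :=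
      aux_mono hm hφ0 hΦ (norm_nonneg _) hqab
    have h2 : Φ ((aa + bb)/2) < (Φ aa + Φ bb)/2 :=
      aux_mid' hφmono hφ0 hΦ (norm_nonneg _) (norm_nonneg _) hab
    linarith
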